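/- Let m be a positive even number and n = 2^m. Then there exists a family of vectors (h_A), indexed by the finite sets A ⊆ Fin m with |A| ≤ m/2 − 1, such that: (i) each h_A lies in the Reed–Muller code RM(m/2 − 1, m); (ii) each h_A has Hamming weight exactly 2^(m/2 + 1) (equal to 2√n); and (iii) the ZMod 2-linear span of {h_A : A ⊆ Fin m, |A| ≤ m/2 − 1} equals RM(m/2 − 1, m). -/

import Mathlib

def vA (m : ℕ) (A : Finset (Fin m)) : (Fin m → ZMod 2) → ZMod 2 :=
  fun x => ∏ a ∈ A, x a

def wt (m : ℕ) (w : (Fin m → ZMod 2) → ZMod 2) : ℕ :=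
  (Finset.univ.filter (fun x => w x = 1)).card

def RMcode (m r : ℕ) : Submodule (ZMod 2) ((Fin m → ZMod 2) → ZMod 2) :=
  Submodule.span (ZMod 2) {w | ∃ A : Finset (Fin m), A.card ≤ r ∧ w = vA m A}

lemma zmod2_mul_eq_one_iff : ∀ a b : ZMod 2, a * b = 1 ↔ a = 1 ∧ b = 1 := by decide

lemma zmod2_add_one_eq_one_iff : ∀ a : ZMod 2, a + 1 = 1 ↔ a = 0 := by decide

lemma zmod2_prod_eq_one_iff {ι : Type*} (s : Finset ι) (f : ι → ZMod 2) :
    ∏ i ∈ s, f i = 1 ↔ ∀ i ∈ s, f i = 1 := by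
  classical
  induction s using Finset.induction_on with
  | empty => simp
  | insert a s hx ih =>
    rw [Finset.prod_insert hx, zmod2_mul_eq_one_iff, ih]
    simp [forall_and]

/-- counting functions that agree with `f` on `C`. -/
lemma count_agree (m : ℕ) (C : Finset (Fin m)) (f : Fin m → ZMod 2) :
    (Finset.univ.filter (fun x : Fin m → ZMod 2 => ∀ i ∈ C, x i = f i)).card
      = 2 ^ (m - C.card) := by
  classical
  have hcard : (Finset.univ : Finset ({i : Fin m // i ∈ Cᶜ} → ZMod 2)).card
      = 2 ^ (m - C.card) := by
    rw [Finset.card_univ, Fintype.card_fun, ZMod.card]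
    congr 1
    simp [Fintype.card_coe, Finset.card_compl]
  rw [← hcard]
  apply Finset.card_bij' (i := fun x _ => fun j => x j.1)
    (j := fun g _ => fun i => if h : i ∈ C then f i else g ⟨i, by simp [h]⟩)
  · intro x hx
    simp only [Finset.mem_filter, Finset.mem_univ, true_and] at hx
    funext i
    by_cases h : i ∈ C <;> simp [h, hx]
  · intro g hg
    funext j
    have hj : j.1 ∉ C := Finset.mem_compl.1 j.2
    simp [hj]
  · intro x hx; exact Finset.mem_univ _
  · intro g hg
    simp only [Finset.mem_filter, Finset.mem_univ, true_and]
    intro i hi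
    simp [hi]

lemma expand (m : ℕ) (A B : Finset (Fin m)) (hd : Disjoint A B) (x : Fin m → ZMod 2) :
    (∏ a ∈ A, x a) * ∏ b ∈ B, (x b + 1) = ∑ S ∈ B.powerset, vA m (A ∪ S) x := by
  classical
  rw [Finset.prod_add, Finset.mul_sum]
  refine Finset.sum_congr rfl ?_
  intro S hS
  rw [Finset.mem_powerset] at hS
  have hdAS : Disjoint A S := hd.mono_right hS
  simp [vA, Finset.prod_union hdAS, mul_assoc]

/-- There is a family of generators `h_A` of `RM(m/2 - 1, m)`, indexed by the
sets `A ⊆ Fin m` with `|A| ≤ m/2 - 1`, each of Hamming weight exactly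
`2 ^ (m/2 + 1) = 2 √n`, that spans the whole code. -/
theorem stmt6 (m : ℕ) (hm : Even m) (h0 : 0 < m) :
    ∃ h : {A : Finset (Fin m) // A.card ≤ m / 2 - 1} → ((Fin m → ZMod 2) → ZMod 2),
      (∀ A, h A ∈ RMcode m (m / 2 - 1)) ∧
      (∀ A, wt m (h A) = 2 ^ (m / 2 + 1)) ∧
      Submodule.span (ZMod 2) (Set.range h) = RMcode m (m / 2 - 1) := by
  classical
  set r : ℕ := m / 2 - 1 with hr
  have hm2 : m / 2 * 2 = m := Nat.div_mul_cancel hm.two_dvd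
  have hm2pos : 1 ≤ m / 2 := by omega
  have hrm : r ≤ m := by omega
  have hmr : m - r = m / 2 + 1 := by omega
  have hex : ∀ A : {A : Finset (Fin m) // A.card ≤ r}, ∃ B ⊆ (A.1)ᶜ, B.card = r - A.1.card := by
    intro A
    apply Finset.exists_subset_card_eq
    rw [Finset.card_compl, Fintype.card_fin]
    omega
  choose B hBsub hBcard using hex
  have hdisj : ∀ A, Disjoint A.1 (B A) := by
    intro A
    rw [Finset.disjoint_left]
    intro i hiA hiB
    exact (Finset.mem_compl.1 (hBsub A hiB)) hiA
  have hcardU : ∀ A, (A.1 ∪ B A).card = r := by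
    intro A
    rw [Finset.card_union_of_disjoint (hdisj A), hBcard A]
    have := A.2
    omega
  have hfun : ∀ A : {A : Finset (Fin m) // A.card ≤ r},
      (fun x => (∏ a ∈ A.1, x a) * ∏ b ∈ B A, (x b + 1))
        = ∑ S ∈ (B A).powerset, vA m (A.1 ∪ S) := by
    intro A
    funext x
    rw [expand m A.1 (B A) (hdisj A) x]
    simp
  have hmem : ∀ A : {A : Finset (Fin m) // A.card ≤ r},
      (fun x => (∏ a ∈ A.1, x a) * ∏ b ∈ B A, (x b + 1)) ∈ RMcode m r := by
    intro A
    rw [hfun A]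
    apply Submodule.sum_mem
    intro S hS
    apply Submodule.subset_span
    refine ⟨A.1 ∪ S, ?_, rfl⟩
    rw [Finset.mem_powerset] at hS
    calc (A.1 ∪ S).card ≤ (A.1 ∪ B A).card :=
          Finset.card_le_card (Finset.union_subset_union_right hS)
      _ = r := hcardU A
  refine ⟨fun A => fun x => (∏ a ∈ A.1, x a) * ∏ b ∈ B A, (x b + 1), ?_, ?_, ?_⟩
  · exact hmem
  · -- weight
    intro A
    show wt m (fun x => (∏ a ∈ A.1, x a) * ∏ b ∈ B A, (x b + 1)) = 2 ^ (m / 2 + 1)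
    have hiff : ∀ x : Fin m → ZMod 2,
        ((∏ a ∈ A.1, x a) * ∏ b ∈ B A, (x b + 1) = 1)
          ↔ ∀ i ∈ A.1 ∪ B A, x i = (if i ∈ A.1 then 1 else 0) := by
      intro x
      rw [zmod2_mul_eq_one_iff, zmod2_prod_eq_one_iff, zmod2_prod_eq_one_iff]
      constructor
      · rintro ⟨h1, h2⟩ i hi
        rcases Finset.mem_union.1 hi with hiA | hiB
        · simp [hiA, h1 i hiA]
        · have hniA : i ∉ A.1 := (Finset.disjoint_right.1 (hdisj A)) hiB
          rw [if_neg hniA]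
          exact (zmod2_add_one_eq_one_iff (x i)).1 (h2 i hiB)
      · intro hall
        constructor
        · intro i hi
          have := hall i (Finset.mem_union_left _ hi)
          simpa [hi] using this
        · intro i hi
          have hniA : i ∉ A.1 := (Finset.disjoint_right.1 (hdisj A)) hi
          have := hall i (Finset.mem_union_right _ hi)
          rw [if_neg hniA] at this
          rw [(zmod2_add_one_eq_one_iff (x i)), this]
    have heq : wt m (fun x => (∏ a ∈ A.1, x a) * ∏ b ∈ B A, (x b + 1))
        = (Finset.univ.filter (fun x : Fin m → ZMod 2 =>
            ∀ i ∈ A.1 ∪ B A, x i = (if i ∈ A.1 then 1 else 0))).card := by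
      unfold wt
      congr 1
      apply Finset.filter_congr
      intro x _
      simpa using hiff x
    rw [heq, count_agree]
    rw [hcardU A, hmr]
  · -- span equality
    apply le_antisymm
    · rw [Submodule.span_le]
      rintro w ⟨A, rfl⟩
      exact hmem A
    · rw [RMcode, Submodule.span_le]
      rintro w ⟨A, hA, rfl⟩
      have key : ∀ k, ∀ A : Finset (Fin m), ∀ hA : A.card ≤ r, r - A.card ≤ k →
          vA m A ∈ Submodule.span (ZMod 2)
            (Set.range (fun A : {A : Finset (Fin m) // A.card ≤ r} =>
              (fun x => (∏ a ∈ A.1, x a) * ∏ b ∈ B A, (x b + 1)))) := by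
        intro k
        induction k with
        | zero =>
          intro A hA hk
          have hBempty : B ⟨A, hA⟩ = ∅ := by
            rw [← Finset.card_eq_zero]
            have hb := hBcard ⟨A, hA⟩
            simp only at hb
            omega
          have hv : vA m A = (fun x => (∏ a ∈ A, x a) * ∏ b ∈ B ⟨A, hA⟩, (x b + 1)) := by
            funext x
            simp [vA, hBempty]
          rw [hv]
          exact Submodule.subset_span ⟨⟨A, hA⟩, rfl⟩
        | succ k ih =>
          intro A hA hk
          have hememp : (∅ : Finset (Fin m)) ∈ (B ⟨A, hA⟩).powerset := by simp
          have hsplit : (fun x => (∏ a ∈ A, x a) * ∏ b ∈ B ⟨A, hA⟩, (x b + 1))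
              = vA m A + ∑ S ∈ (B ⟨A, hA⟩).powerset.erase ∅, vA m (A ∪ S) := by
            rw [hfun ⟨A, hA⟩, ← Finset.add_sum_erase _ _ hememp]
            simp
          have h1 : vA m A = (fun x => (∏ a ∈ A, x a) * ∏ b ∈ B ⟨A, hA⟩, (x b + 1))
              - ∑ S ∈ (B ⟨A, hA⟩).powerset.erase ∅, vA m (A ∪ S) := by
            rw [hsplit]; abel
          rw [h1]
          apply Submodule.sub_mem
          · exact Submodule.subset_span ⟨⟨A, hA⟩, rfl⟩
          · apply Submodule.sum_mem
            intro S hS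
            rw [Finset.mem_erase, Finset.mem_powerset] at hS
            obtain ⟨hS0, hSB⟩ := hS
            have hScard : 1 ≤ S.card := Finset.card_pos.2 (Finset.nonempty_iff_ne_empty.2 hS0)
            have hdAS : Disjoint A S := (hdisj ⟨A, hA⟩).mono_right hSB
            have hABcard : (A ∪ S).card = A.card + S.card :=
              Finset.card_union_of_disjoint hdAS
            have hc : S.card ≤ r - A.card :=
              le_of_le_of_eq (Finset.card_le_card hSB) (hBcard ⟨A, hA⟩)
            have hle : (A ∪ S).card ≤ r := by omega
            apply ih
            · exact hle
            · omega
      exact key (r - A.card) A hA le_rfl
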